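/- Let X be an infinite-dimensional Banach space, A a bounded linear operator on X, n a natural number, ε > 0, and F ⊆ X a finite-dimensional subspace. Then there exists a unit vector u ∈ X such that dist(A^n u, F) ≥ ((1 − ε)/2)·‖A^n‖_μ, where ‖T‖_μ = inf{‖T restricted to M‖ : M ⊆ X closed subspace of finite codimension}. -/

import Mathlib

/-- The μ-measure of non-compactness of a bounded operator: the infimum of the norms of its
restrictions to closed subspaces of finite codimension. -/
noncomputable def muNorm {X : Type*} [NormedAddCommGroup X] [NormedSpace ℂ X]
    (A : X →L[ℂ] X) : ℝ :=
  sInf {c : ℝ | ∃ M : Submodule ℂ X, IsClosed (M : Set X) ∧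
    FiniteDimensional ℂ (X ⧸ M) ∧ c = ‖A.comp M.subtypeL‖}

/-- There is a unit vector `u` with `dist(Aⁿu, F) ≥ ((1 − ε)/2)·‖Aⁿ‖_μ` for any
finite-dimensional subspace `F` of an infinite-dimensional Banach space. -/
theorem stmt_4 (X : Type*) [NormedAddCommGroup X] [NormedSpace ℂ X] [CompleteSpace X]
    (hX : ¬ FiniteDimensional ℂ X)
    (A : X →L[ℂ] X) (n : ℕ) (ε : ℝ) (hε : 0 < ε)
    (F : Submodule ℂ X) (hF : FiniteDimensional ℂ F) :
    ∃ u : X, ‖u‖ = 1 ∧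
      Metric.infDist ((A ^ n) u) (F : Set X) ≥ (1 - ε) / 2 * muNorm (A ^ n) := by
  set T := A ^ n with hT
  have hm0 : 0 ≤ muNorm T := by
    refine Real.sInf_nonneg ?_
    rintro c ⟨M, -, -, rfl⟩
    exact ContinuousLinearMap.opNorm_nonneg _
  have hbdd : BddBelow {c : ℝ | ∃ M : Submodule ℂ X, IsClosed (M : Set X) ∧
      FiniteDimensional ℂ (X ⧸ M) ∧ c = ‖T.comp M.subtypeL‖} := by
    refine ⟨0, ?_⟩
    rintro c ⟨M, -, -, rfl⟩
    exact ContinuousLinearMap.opNorm_nonneg _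
  have hnontriv : Nontrivial X := by
    by_contra hns
    rw [not_nontrivial_iff_subsingleton] at hns
    exact hX inferInstance
  by_cases hc : 0 < (1 - ε) / 2 * muNorm T
  · by_contra hcon
    push_neg at hcon
    set c := (1 - ε) / 2 * muNorm T with hc_def
    have hm : 0 < muNorm T := by
      rcases lt_or_eq_of_le hm0 with h | h
      · exact h
      · exfalso; rw [hc_def, ← h] at hc; simp at hc
    set δ := ε * muNorm T / 4 with hδ_def
    have hδ : 0 < δ := by positivity
    set R := ‖T‖ + c with hR
    haveI : ProperSpace F := FiniteDimensional.proper ℂ F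
    have hK : IsCompact (Subtype.val '' (Metric.closedBall (0 : F) R)) :=
      (isCompact_closedBall _ _).image continuous_subtype_val
    obtain ⟨t, htfin, htcov⟩ := (Metric.totallyBounded_iff.mp hK.totallyBounded) δ hδ
    haveI := htfin.fintype
    choose φ hφ1 hφ2 using fun y : t => exists_dual_vector'' ℂ (y : X)
    set Φ : X →L[ℂ] (t → ℂ) := ContinuousLinearMap.pi (fun i => (φ i).comp T) with hΦ
    set M : Submodule ℂ X := LinearMap.ker (Φ : X →ₗ[ℂ] (t → ℂ)) with hM
    have hMclosed : IsClosed (M : Set X) := ContinuousLinearMap.isClosed_ker Φ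
    have hMfd : FiniteDimensional ℂ (X ⧸ M) := by
      have e := (Φ.toLinearMap).quotKerEquivRange
      have : FiniteDimensional ℂ (LinearMap.range Φ.toLinearMap) := inferInstance
      exact Module.Finite.equiv e.symm
    have hle : muNorm T ≤ ‖T.comp M.subtypeL‖ :=
      csInf_le hbdd ⟨M, hMclosed, hMfd, rfl⟩
    have hbound : ‖T.comp M.subtypeL‖ ≤ 2 * (c + δ) := by
      apply ContinuousLinearMap.opNorm_le_bound _ (by positivity)
      intro x
      by_cases hx0 : (x : X) = 0
      · simp [hx0]
      have hxn : ‖(x : X)‖ ≠ 0 := norm_ne_zero_iff.mpr hx0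
      set u : X := ((‖(x : X)‖ : ℂ)⁻¹) • (x : X) with hu_def
      have hu1 : ‖u‖ = 1 := by
        rw [hu_def, norm_smul, norm_inv, Complex.norm_real, norm_norm,
          inv_mul_cancel₀ hxn]
      have hker : ∀ i : t, φ i (T u) = 0 := by
        intro i
        have hx : Φ (x : X) = 0 := LinearMap.mem_ker.mp x.2
        have h0 : φ i (T (x : X)) = 0 := congrFun hx i
        rw [hu_def, map_smul, map_smul, h0, smul_zero]
      have hcd := hcon u hu1
      obtain ⟨f, hfF, hfd⟩ := (Metric.infDist_lt_iff ⟨0, F.zero_mem⟩).mp hcd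
      have hfd' : ‖T u - f‖ < c := by rwa [dist_eq_norm] at hfd
      have hTu : ‖T u‖ ≤ ‖T‖ := by
        calc ‖T u‖ ≤ ‖T‖ * ‖u‖ := T.le_opNorm u
        _ = ‖T‖ := by rw [hu1, mul_one]
      have hfR : ‖f‖ ≤ R := by
        have h1 := abs_norm_sub_norm_le (T u) f
        have h2 := abs_le.mp h1
        have hcle : c ≤ R := by
          have := norm_nonneg T; simp only [hR]; linarith
        linarith [h2.1]
      have hfK : f ∈ Subtype.val '' (Metric.closedBall (0 : F) R) := by
        refine ⟨⟨f, hfF⟩, ?_, rfl⟩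
        simpa [Metric.mem_closedBall, dist_zero_right] using hfR
      obtain ⟨y, hyt, hyb⟩ := Set.mem_iUnion₂.mp (htcov hfK)
      have hfy : ‖f - y‖ < δ := by
        rw [← dist_eq_norm]; exact Metric.mem_ball.mp hyb
      set i : t := ⟨y, hyt⟩ with hi
      have hTuy : ‖T u - y‖ < c + δ := by
        calc ‖T u - y‖ = ‖(T u - f) + (f - y)‖ := by rw [sub_add_sub_cancel]
        _ ≤ ‖T u - f‖ + ‖f - y‖ := norm_add_le _ _
        _ < c + δ := by linarith
      have hyn : ‖y‖ ≤ c + δ := by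
        have h1 : φ i (y : X) = (‖(y : X)‖ : ℂ) := hφ2 i
        have h2 : φ i (y - T u) = (‖y‖ : ℂ) := by
          rw [map_sub, hker i, sub_zero]; exact h1
        have h3 : ‖(‖y‖ : ℂ)‖ = ‖y‖ := by
          rw [Complex.norm_real, norm_norm]
        calc ‖y‖ = ‖φ i (y - T u)‖ := by rw [h2, h3]
        _ ≤ ‖φ i‖ * ‖y - T u‖ := (φ i).le_opNorm _
        _ ≤ 1 * ‖y - T u‖ := by
            apply mul_le_mul_of_nonneg_right (hφ1 i) (norm_nonneg _)
        _ = ‖T u - y‖ := by rw [one_mul, norm_sub_rev]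
        _ ≤ c + δ := le_of_lt hTuy
      have hTub : ‖T u‖ ≤ 2 * (c + δ) := by
        calc ‖T u‖ = ‖(T u - y) + y‖ := by rw [sub_add_cancel]
        _ ≤ ‖T u - y‖ + ‖y‖ := norm_add_le _ _
        _ ≤ 2 * (c + δ) := by linarith
      have hTx : ‖T (x : X)‖ = ‖(x : X)‖ * ‖T u‖ := by
        rw [hu_def, map_smul, norm_smul, norm_inv, Complex.norm_real, norm_norm,
          ← mul_assoc, mul_inv_cancel₀ hxn, one_mul]
      have hxeq : ‖(T.comp M.subtypeL) x‖ = ‖T (x : X)‖ := rfl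
      have hxnorm : ‖x‖ = ‖(x : X)‖ := rfl
      rw [hxeq, hxnorm, hTx, mul_comm]
      exact mul_le_mul_of_nonneg_right hTub (norm_nonneg _)
    have : muNorm T ≤ 2 * (c + δ) := le_trans hle hbound
    rw [hc_def, hδ_def] at this
    nlinarith [hm]
  · obtain ⟨x, hx⟩ := exists_ne (0 : X)
    have hxn : ‖x‖ ≠ 0 := norm_ne_zero_iff.mpr hx
    refine ⟨((‖x‖ : ℂ)⁻¹) • x, ?_, ?_⟩
    · rw [norm_smul, norm_inv, Complex.norm_real, norm_norm, inv_mul_cancel₀ hxn]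
    · have := Metric.infDist_nonneg (x := T (((‖x‖ : ℂ)⁻¹) • x)) (s := (F : Set X))
      push_neg at hc
      linarith
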